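/- For any real numbers x ≥ y > 1, (x-1)·log x + y - (y-1)·log y - x ≤ log Γ(x) - log Γ(y) ≤ (x - 1/2)·log x + y - (y - 1/2)·log y - x, where Γ is the Gamma function. -/

import Mathlib

open Set Filter Real

namespace KV

/-- log Gamma -/
noncomputable def L : ℝ → ℝ := fun t => Real.log (Real.Gamma t)

/-- digamma as deriv of log Gamma -/
noncomputable def ψ : ℝ → ℝ := deriv L

lemma gamma_ne_neg_nat {t : ℝ} (ht : 0 < t) : ∀ m : ℕ, t ≠ -m := by
  intro m
  have : (0:ℝ) ≤ m := Nat.cast_nonneg m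
  intro h; rw [h] at ht; linarith

lemma diffL {t : ℝ} (ht : 0 < t) : DifferentiableAt ℝ L t :=
  (Real.differentiableAt_Gamma (gamma_ne_neg_nat ht)).log (Real.Gamma_pos_of_pos ht).ne'

lemma hasDerivL {t : ℝ} (ht : 0 < t) : HasDerivAt L (ψ t) t :=
  (diffL ht).hasDerivAt

lemma convL : ConvexOn ℝ (Ioi 0) L := Real.convexOn_log_Gamma

lemma Lrec {t : ℝ} (ht : 0 < t) : L (t + 1) = Real.log t + L t := by
  unfold L
  rw [Real.Gamma_add_one ht.ne', Real.log_mul ht.ne' (Real.Gamma_pos_of_pos ht).ne']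

lemma slopeL {t : ℝ} (ht : 0 < t) : slope L t (t + 1) = Real.log t := by
  rw [slope_def_field, Lrec ht]
  ring

lemma psi_le_log {t : ℝ} (ht : 0 < t) : ψ t ≤ Real.log t := by
  have := convL.deriv_le_slope (mem_Ioi.2 ht) (mem_Ioi.2 (by linarith : (0:ℝ) < t + 1))
    (by linarith) (diffL ht)
  rwa [slopeL ht] at this

lemma log_le_psi_succ {t : ℝ} (ht : 0 < t) : Real.log t ≤ ψ (t + 1) := by
  have := convL.slope_le_deriv (mem_Ioi.2 ht) (mem_Ioi.2 (by linarith : (0:ℝ) < t + 1))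
    (by linarith) (diffL (by linarith))
  rwa [slopeL ht] at this

lemma psiRec {t : ℝ} (ht : 0 < t) : ψ (t + 1) = ψ t + 1 / t := by
  have h1 : HasDerivAt (fun s => L (s + 1)) (ψ (t + 1) * 1) t :=
    (hasDerivL (by linarith : (0:ℝ) < t + 1)).comp (h₂ := L) (h := fun s : ℝ => s + 1) t
      ((hasDerivAt_id t).add_const 1)
  have h2 : (fun s => L (s + 1)) =ᶠ[nhds t] fun s => Real.log s + L s := by
    filter_upwards [Ioi_mem_nhds ht] with s hs
    exact Lrec hs
  have h3 : HasDerivAt (fun s => Real.log s + L s) (ψ (t + 1) * 1) t :=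
    h1.congr_of_eventuallyEq h2.symm
  have h4 : HasDerivAt (fun s => Real.log s + L s) (t⁻¹ + ψ t) t :=
    (Real.hasDerivAt_log ht.ne').add (hasDerivL ht)
  have := h3.unique h4
  rw [mul_one] at this
  rw [this, one_div]; ring

lemma psi_ge {t : ℝ} (ht : 0 < t) : Real.log t - 1 / t ≤ ψ t := by
  have h1 := log_le_psi_succ ht
  rw [psiRec ht] at h1
  linarith

/- ### Lower bound -/

lemma hasDerivF {t : ℝ} (ht : 0 < t) :
    HasDerivAt (fun s => (s - 1) * Real.log s - s) (Real.log t - 1 / t) t := by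
  have h : HasDerivAt (fun s => (s - 1) * Real.log s - s)
      ((1 * Real.log t + (t - 1) * t⁻¹) - 1) t :=
    (((hasDerivAt_id t).sub_const 1).mul (Real.hasDerivAt_log ht.ne')).sub (hasDerivAt_id t)
  convert h using 1
  field_simp
  ring

lemma lower {x y : ℝ} (hy : 0 < y) (hxy : y < x) :
    ((x - 1) * Real.log x - x) - ((y - 1) * Real.log y - y) ≤ L x - L y := by
  set H : ℝ → ℝ := fun t => L t - ((t - 1) * Real.log t - t) with hH
  have hder : ∀ t ∈ Ioo y x, HasDerivAt H (ψ t - (Real.log t - 1 / t)) t := by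
    intro t ht
    exact (hasDerivL (hy.trans ht.1)).sub (hasDerivF (hy.trans ht.1))
  have hcont : ContinuousOn H (Icc y x) := by
    intro t ht
    have ht0 : 0 < t := lt_of_lt_of_le hy ht.1
    exact (((hasDerivL ht0).sub (hasDerivF ht0)).continuousAt).continuousWithinAt
  obtain ⟨c, hc, hceq⟩ := exists_hasDerivAt_eq_slope H _ hxy hcont hder
  have hc0 : 0 < c := hy.trans hc.1
  have hnn : 0 ≤ (H x - H y) / (x - y) := by
    rw [← hceq]
    have := psi_ge hc0
    linarith
  have hxy' : 0 < x - y := by linarith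
  have : 0 ≤ H x - H y := by
    by_contra hneg
    push_neg at hneg
    have := div_neg_of_neg_of_pos hneg hxy'
    linarith
  simp only [hH] at this
  linarith

/- ### Key elementary inequality: G ≥ 0 on (0, ∞) -/

noncomputable def G : ℝ → ℝ := fun t => (2*t)⁻¹ + (2*(t+1))⁻¹ - (Real.log (t+1) - Real.log t)
noncomputable def φ : ℝ → ℝ := fun t => (t + 1/2) * (Real.log (t+1) - Real.log t) - 1

lemma hasDerivAt_log_succ {t : ℝ} (ht : 0 < t) :
    HasDerivAt (fun s : ℝ => Real.log (s + 1)) ((t+1)⁻¹) t := by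
  have h := (Real.hasDerivAt_log (by linarith : t + 1 ≠ 0)).comp t
    ((hasDerivAt_id t).add_const 1)
  simpa [Function.comp_def] using h

set_option maxHeartbeats 1000000 in
lemma hasDerivG {t : ℝ} (ht : 0 < t) :
    HasDerivAt G (-((1:ℝ)/t - 1/(t+1))^2/2) t := by
  have h1 : HasDerivAt (fun s : ℝ => (2*s)⁻¹) (-(2*1) / (2*t)^2) t :=
    (((hasDerivAt_id t).const_mul 2)).inv (by positivity)
  have h2 : HasDerivAt (fun s : ℝ => (2*(s+1))⁻¹) (-(2*1) / (2*(t+1))^2) t :=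
    ((((hasDerivAt_id t).add_const 1).const_mul 2)).inv (by positivity)
  have h3 : HasDerivAt (fun s : ℝ => Real.log (s+1) - Real.log s) ((t+1)⁻¹ - t⁻¹) t :=
    (hasDerivAt_log_succ ht).sub (Real.hasDerivAt_log ht.ne')
  have h := (h1.add h2).sub h3
  have h0 : t ≠ 0 := ht.ne'
  have h0' : t + 1 ≠ 0 := by linarith
  have heq : -((1:ℝ)/t - 1/(t+1))^2/2
      = (-(2*1) / (2*t)^2 + -(2*1) / (2*(t+1))^2) - ((t+1)⁻¹ - t⁻¹) := by
    field_simp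
    ring
  rw [heq]
  exact h

lemma G_tendsto : Tendsto G atTop (nhds 0) := by
  have tA : Tendsto (fun t : ℝ => (2*t)⁻¹) atTop (nhds 0) := by
    have h1 : (fun t : ℝ => (2*t)⁻¹) = fun t : ℝ => (1/2) * t⁻¹ := by
      funext t; rw [mul_inv]; ring
    rw [h1]
    simpa using tendsto_inv_atTop_zero.const_mul (1/2 : ℝ)
  have tB : Tendsto (fun t : ℝ => (2*(t+1))⁻¹) atTop (nhds 0) := by
    have h1 : (fun t : ℝ => (2*(t+1))⁻¹) = fun t : ℝ => (1/2) * (t+1)⁻¹ := by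
      funext t; rw [mul_inv]; ring
    rw [h1]
    have h2 : Tendsto (fun t : ℝ => (t+1)⁻¹) atTop (nhds 0) :=
      tendsto_inv_atTop_zero.comp (tendsto_atTop_add_const_right atTop 1 tendsto_id)
    simpa using h2.const_mul (1/2 : ℝ)
  have tC : Tendsto (fun t : ℝ => Real.log (t+1) - Real.log t) atTop (nhds 0) :=
    Real.tendsto_log_comp_add_sub_log 1
  have h := (tA.add tB).sub tC
  unfold G
  simpa using h

lemma G_antitone : AntitoneOn G (Ioi 0) := by
  apply antitoneOn_of_deriv_nonpos (convex_Ioi 0)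
  · intro t ht
    exact (hasDerivG ht).continuousAt.continuousWithinAt
  · intro t ht
    rw [interior_Ioi] at ht
    exact (hasDerivG ht).differentiableAt.differentiableWithinAt
  · intro t ht
    rw [interior_Ioi] at ht
    rw [(hasDerivG ht).deriv]
    have : (0:ℝ) ≤ ((1:ℝ)/t - 1/(t+1))^2 := sq_nonneg _
    linarith

lemma G_nonneg {t : ℝ} (ht : 0 < t) : 0 ≤ G t := by
  refine le_of_tendsto G_tendsto ?_
  filter_upwards [eventually_ge_atTop t] with s hs
  exact G_antitone (mem_Ioi.2 ht) (mem_Ioi.2 (lt_of_lt_of_le ht hs)) hs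

set_option maxHeartbeats 1000000 in
lemma hasDerivφ {t : ℝ} (ht : 0 < t) : HasDerivAt φ (-(G t)) t := by
  have h := (((hasDerivAt_id t).add_const (1/2)).mul
      ((hasDerivAt_log_succ ht).sub (Real.hasDerivAt_log ht.ne'))).sub_const 1
  simp only [id_eq] at h
  have h0 : t ≠ 0 := ht.ne'
  have h0' : t + 1 ≠ 0 := by linarith
  have heq : -(G t) = 1 * (Real.log (t+1) - Real.log t) + (t + 1/2) * ((t+1)⁻¹ - t⁻¹) := by
    unfold G
    field_simp
    ring
  rw [heq]
  exact h

lemma φ_antitone : AntitoneOn φ (Ioi 0) := by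
  apply antitoneOn_of_deriv_nonpos (convex_Ioi 0)
  · intro t ht
    exact (hasDerivφ ht).continuousAt.continuousWithinAt
  · intro t ht
    rw [interior_Ioi] at ht
    exact (hasDerivφ ht).differentiableAt.differentiableWithinAt
  · intro t ht
    rw [interior_Ioi] at ht
    rw [(hasDerivφ ht).deriv]
    have := G_nonneg ht
    linarith

/- ### Upper bound -/

noncomputable def g : ℝ → ℝ := fun t => (t - 1/2) * Real.log t - t
noncomputable def hh : ℝ → ℝ := fun t => L t - g t

lemma hasDerivg {t : ℝ} (ht : 0 < t) :
    HasDerivAt g (Real.log t - (2*t)⁻¹) t := by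
  have h : HasDerivAt (fun s : ℝ => (s - 1/2) * Real.log s - s)
      ((1 * Real.log t + (t - 1/2) * t⁻¹) - 1) t :=
    (((hasDerivAt_id t).sub_const (1/2)).mul (Real.hasDerivAt_log ht.ne')).sub (hasDerivAt_id t)
  have heq : Real.log t - (2*t)⁻¹ = (1 * Real.log t + (t - 1/2) * t⁻¹) - 1 := by
    have h0 : t ≠ 0 := ht.ne'
    field_simp
    ring
  rw [heq]
  exact h

lemma hh_step {t : ℝ} (ht : 0 < t) : hh (t + 1) = hh t - φ t := by
  unfold hh g φ
  rw [Lrec ht]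
  ring

lemma hh_diff_le {x y : ℝ} (hy : 1 < y) (hxy : y < x) {n : ℕ} :
    hh (x + n) - hh (y + n)
      ≤ (x - y) * ((Real.log (x + n) - Real.log (y + n)) + (2*(y + n))⁻¹) := by
  have hn : (0:ℝ) ≤ n := Nat.cast_nonneg n
  have ha : (0:ℝ) < y + n := by linarith
  have hb : (0:ℝ) < x + n := by linarith
  have hab : y + (n:ℝ) < x + n := by linarith
  -- L part
  have s1 : slope L (y + n) (x + n) ≤ ψ (x + n) :=
    convL.slope_le_deriv (mem_Ioi.2 ha) (mem_Ioi.2 hb) hab (diffL hb)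
  rw [slope_def_field] at s1
  have hL : L (x + n) - L (y + n) ≤ Real.log (x + n) * (x - y) := by
    have hden : (0:ℝ) < x + n - (y + n) := by linarith
    rw [div_le_iff₀ hden] at s1
    have h2 := psi_le_log hb
    nlinarith
  -- g part via MVT
  have hcont : ContinuousOn g (Icc (y + n) (x + n)) := by
    intro t htt
    have ht0 : 0 < t := lt_of_lt_of_le ha htt.1
    exact (hasDerivg ht0).continuousAt.continuousWithinAt
  have hder : ∀ t ∈ Ioo (y + (n:ℝ)) (x + n), HasDerivAt g (Real.log t - (2*t)⁻¹) t :=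
    fun t htt => hasDerivg (ha.trans htt.1)
  obtain ⟨c, hc, hceq⟩ := exists_hasDerivAt_eq_slope g _ hab hcont hder
  have hc0 : 0 < c := ha.trans hc.1
  have hg : (Real.log (y + n) - (2*(y + n))⁻¹) * (x - y) ≤ g (x + n) - g (y + n) := by
    have hlog : Real.log (y + n) ≤ Real.log c := Real.log_le_log ha hc.1.le
    have hinv : (2*c)⁻¹ ≤ (2*(y + n))⁻¹ := by
      apply inv_anti₀ (by linarith)
      linarith [hc.1]
    have hslope : Real.log (y + n) - (2*(y + n))⁻¹ ≤ (g (x + n) - g (y + n)) / (x + n - (y + n)) := by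
      rw [← hceq]; linarith
    have hden : (0:ℝ) < x + n - (y + n) := by linarith
    rw [le_div_iff₀ hden] at hslope
    have : x + (n:ℝ) - (y + n) = x - y := by ring
    rw [this] at hslope
    exact hslope
  -- combine
  have hexp : (x - y) * ((Real.log (x + n) - Real.log (y + n)) + (2*(y + n))⁻¹)
      = Real.log (x + n) * (x - y) - (Real.log (y + n) - (2*(y + n))⁻¹) * (x - y) := by
    ring
  unfold hh
  linarith [hL, hg, hexp.ge, hexp.le]

lemma seq_tendsto {x y : ℝ} (hy : 1 < y) (hxy : y < x) :
    Tendsto (fun n : ℕ => (x - y) * ((Real.log (x + n) - Real.log (y + n)) + (2*(y + n))⁻¹))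
      atTop (nhds 0) := by
  have hyn : ∀ n : ℕ, (0:ℝ) < y + n := fun n => by
    have : (0:ℝ) ≤ n := Nat.cast_nonneg n; linarith
  have hxn : ∀ n : ℕ, (0:ℝ) < x + n := fun n => by
    have : (0:ℝ) ≤ n := Nat.cast_nonneg n; linarith
  have t0 : Tendsto (fun n : ℕ => y + (n:ℝ)) atTop atTop :=
    tendsto_atTop_add_const_left atTop y tendsto_natCast_atTop_atTop
  have tinv : Tendsto (fun n : ℕ => (y + (n:ℝ))⁻¹) atTop (nhds 0) :=
    tendsto_inv_atTop_zero.comp t0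
  have t2 : Tendsto (fun n : ℕ => (2*(y + (n:ℝ)))⁻¹) atTop (nhds 0) := by
    have h1 : (fun n : ℕ => (2*(y + (n:ℝ)))⁻¹) = fun n : ℕ => (1/2) * (y + (n:ℝ))⁻¹ := by
      funext n; rw [mul_inv]; ring
    rw [h1]
    simpa using tinv.const_mul (1/2 : ℝ)
  have t1 : Tendsto (fun n : ℕ => Real.log (x + n) - Real.log (y + n)) atTop (nhds 0) := by
    have e : ∀ n : ℕ, Real.log (x + n) - Real.log (y + n) = Real.log ((x + n)/(y + n)) :=
      fun n => (Real.log_div (hxn n).ne' (hyn n).ne').symm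
    have er : ∀ n : ℕ, (x + (n:ℝ))/(y + n) = 1 + (x - y) * (y + (n:ℝ))⁻¹ := by
      intro n
      field_simp
      ring
    have tr : Tendsto (fun n : ℕ => 1 + (x - y) * (y + (n:ℝ))⁻¹) atTop (nhds 1) := by
      have := (tinv.const_mul (x - y)).const_add (1:ℝ)
      simpa using this
    have tr' : Tendsto (fun n : ℕ => (x + (n:ℝ))/(y + n)) atTop (nhds 1) := by
      simp only [er]; exact tr
    have tl : Tendsto (fun n : ℕ => Real.log ((x + (n:ℝ))/(y + n))) atTop (nhds (Real.log 1)) :=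
      ((Real.continuousAt_log one_ne_zero).tendsto).comp tr'
    rw [Real.log_one] at tl
    simp only [e]
    exact tl
  have := (t1.add t2).const_mul (x - y)
  simpa using this

end KV

theorem keckic_vasic (x y : ℝ) (hy : 1 < y) (hxy : y ≤ x) :
    (x - 1) * Real.log x + y - (y - 1) * Real.log y - x ≤
      Real.log (Real.Gamma x) - Real.log (Real.Gamma y) ∧
    Real.log (Real.Gamma x) - Real.log (Real.Gamma y) ≤
      (x - 1 / 2) * Real.log x + y - (y - 1 / 2) * Real.log y - x := by
  obtain rfl | hlt := hxy.eq_or_lt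
  · constructor <;> simp
  constructor
  · have := KV.lower (by linarith : (0:ℝ) < y) hlt
    unfold KV.L at this
    linarith
  · -- upper bound
    have key : ∀ n : ℕ, KV.hh x - KV.hh y ≤ KV.hh (x + n) - KV.hh (y + n) := by
      intro n
      induction n with
      | zero => simp
      | succ n ih =>
        have hn : (0:ℝ) ≤ n := Nat.cast_nonneg n
        have hxn : (0:ℝ) < x + n := by linarith
        have hyn : (0:ℝ) < y + n := by linarith
        have hmono := KV.φ_antitone (Set.mem_Ioi.2 hyn) (Set.mem_Ioi.2 hxn)
          (by linarith : y + (n:ℝ) ≤ x + n)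
        have ex : ((n+1 : ℕ) : ℝ) = (n:ℝ) + 1 := by push_cast; ring
        rw [ex, show x + ((n:ℝ)+1) = (x + n) + 1 by ring,
          show y + ((n:ℝ)+1) = (y + n) + 1 by ring, KV.hh_step hxn, KV.hh_step hyn]
        linarith
    have hfinal : KV.hh x - KV.hh y ≤ 0 := by
      refine ge_of_tendsto (KV.seq_tendsto hy hlt) ?_
      filter_upwards with n
      exact (key n).trans (KV.hh_diff_le hy hlt)
    unfold KV.hh KV.g KV.L at hfinal
    linarith
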